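/- Fix ρ > 0 and K ≥ 2. For scoring vectors u, v ∈ ℝ^K with ∑_k u_k = 0 and ∑_k v_k = 0, and for any label y ∈ {1,…,K}, the following pointwise inequality holds: (1/K)·‖M^ρ(u) − M^ρ(v)‖_1 ≤ L^ρ(u, y) + L^ρ(v, y), where M^ρ(w) ∈ [0,1]^{K×K} is the matrix with entries M^ρ_{i,j}(w) = Φ_ρ(μ_i(w, j)), ‖·‖_1 is the entrywise L1 norm, and L^ρ(w, y) = ∑_{k=1}^K Φ_ρ(μ_k(w, y)). -/

import Mathlib

open MeasureTheory Finset

/-- The ramp loss with margin `ρ`. -/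
noncomputable def ramp (ρ x : ℝ) : ℝ :=
  if ρ ≤ x then 0 else if x ≤ 0 then 1 else 1 - x / ρ

/-- The absolute margin function: `margin w y k = w k` if `k = y`, else `-w k`. -/
def margin {K : ℕ} (w : Fin K → ℝ) (y k : Fin K) : ℝ :=
  if k = y then w k else -w k

/-- Entrywise L1 distance between the matrices of absolute margin violations
`M^ρ(u)` and `M^ρ(v)`, where `M^ρ_{i,j}(w) = Φ_ρ(μ_i(w,j))`. -/
noncomputable def l1diff (ρ : ℝ) {K : ℕ} (u v : Fin K → ℝ) : ℝ :=
  ∑ i : Fin K, ∑ j : Fin K, |ramp ρ (margin u j i) - ramp ρ (margin v j i)|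

/-- The margin-based multi-class loss `L^ρ(w, y) = ∑_k Φ_ρ(μ_k(w,y))`. -/
noncomputable def Lmargin (ρ : ℝ) {K : ℕ} (w : Fin K → ℝ) (y : Fin K) : ℝ :=
  ∑ k : Fin K, ramp ρ (margin w y k)

lemma ramp_nonneg {ρ : ℝ} (hρ : 0 < ρ) (x : ℝ) : 0 ≤ ramp ρ x := by
  unfold ramp
  split_ifs with h1 h2
  · exact le_refl 0
  · exact zero_le_one
  · push_neg at h1 h2
    have : x / ρ < 1 := (div_lt_one hρ).mpr h1
    linarith

lemma ramp_le_one {ρ : ℝ} (hρ : 0 < ρ) (x : ℝ) : ramp ρ x ≤ 1 := by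
  unfold ramp
  split_ifs with h1 h2
  · exact zero_le_one
  · exact le_refl 1
  · push_neg at h1 h2
    have : 0 < x / ρ := div_pos h2 hρ
    linarith

lemma one_le_ramp_add {ρ : ℝ} (hρ : 0 < ρ) (x : ℝ) : 1 ≤ ramp ρ x + ramp ρ (-x) := by
  unfold ramp
  split_ifs <;> (try push_neg at *) <;>
    first
    | linarith
    | (have h' : -x / ρ ≤ 1 := (div_le_one hρ).mpr (by linarith); linarith)
    | (have h' : x / ρ ≤ 1 := (div_le_one hρ).mpr (by linarith); linarith)

lemma abs_ramp_sub_le {ρ : ℝ} (hρ : 0 < ρ) (a b : ℝ) :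
    |ramp ρ a - ramp ρ b| ≤ ramp ρ a + ramp ρ b := by
  rw [abs_sub_le_iff]
  constructor <;> nlinarith [ramp_nonneg hρ a, ramp_nonneg hρ b]

lemma abs_ramp_sub_le_neg {ρ : ℝ} (hρ : 0 < ρ) (a b : ℝ) :
    |ramp ρ (-a) - ramp ρ (-b)| ≤ ramp ρ a + ramp ρ b := by
  rw [abs_sub_le_iff]
  constructor <;>
    nlinarith [one_le_ramp_add hρ a, one_le_ramp_add hρ b,
      ramp_le_one hρ (-a), ramp_le_one hρ (-b)]

theorem mcsd_pointwise_le_losses {K : ℕ} (hK : 2 ≤ K) (ρ : ℝ) (hρ : 0 < ρ)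
    (u v : Fin K → ℝ) (hu : ∑ k : Fin K, u k = 0) (hv : ∑ k : Fin K, v k = 0)
    (y : Fin K) :
    (1 / (K : ℝ)) * l1diff ρ u v ≤ Lmargin ρ u y + Lmargin ρ v y := by
  have hK0 : (0:ℝ) < K := by
    have : 0 < K := lt_of_lt_of_le (by norm_num) hK
    exact_mod_cast this
  rw [one_div, inv_mul_le_iff₀ hK0]
  unfold l1diff Lmargin
  rw [← Finset.sum_add_distrib, Finset.mul_sum]
  apply Finset.sum_le_sum
  intro i _
  have key : ∀ j : Fin K, |ramp ρ (margin u j i) - ramp ρ (margin v j i)| ≤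
      ramp ρ (margin u y i) + ramp ρ (margin v y i) := by
    intro j
    unfold margin
    split_ifs
    · exact abs_ramp_sub_le hρ _ _
    · have := abs_ramp_sub_le_neg hρ (-(u i)) (-(v i))
      simpa using this
    · exact abs_ramp_sub_le_neg hρ _ _
    · exact abs_ramp_sub_le hρ _ _
  calc ∑ j : Fin K, |ramp ρ (margin u j i) - ramp ρ (margin v j i)|
      ≤ ∑ _j : Fin K, (ramp ρ (margin u y i) + ramp ρ (margin v y i)) :=
        Finset.sum_le_sum fun j _ => key j
    _ = (K : ℝ) * (ramp ρ (margin u y i) + ramp ρ (margin v y i)) := by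
        rw [Finset.sum_const, Finset.card_univ, Fintype.card_fin, nsmul_eq_mul]
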